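/- For any nonempty strings s and p and any interval [b, e] with 1 ≤ b ≤ e ≤ b + |p|, the set of occurrences of p in s that lie in [b, e] forms a single arithmetic progression (i.e., there exist integers a, c, k ≥ 0 such that Occ(s,p) ∩ [b,e] = {a + c·j : 0 ≤ j < k}). -/

import Mathlib

/-- `w` is periodic with (positive) period candidate `c` (no upper bound on `c`). -/
def hasPer (w : List Char) (c : ℕ) : Prop :=
  0 < c ∧ ∀ j, j + c < w.length → w[j]? = w[j + c]?

/-- `c` is a period of `w`: `0 < c ≤ |w|` and `w[i] = w[i+c]` for all valid `i`. -/
def hasPeriod (w : List Char) (c : ℕ) : Prop :=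
  hasPer w c ∧ c ≤ w.length

/-- the substring `s[i..j]` (1-indexed, inclusive). -/
def sub (s : List Char) (i j : ℕ) : List Char :=
  (s.drop (i - 1)).take (j - i + 1)

/-- `p` occurs in `s` at (1-indexed) position `i`. -/
def occursAt (s p : List Char) (i : ℕ) : Prop :=
  1 ≤ i ∧ i + p.length ≤ s.length + 1 ∧ sub s i (i + p.length - 1) = p

/-- `u^k` -/
def listPow (u : List Char) (k : ℕ) : List Char := (List.replicate k u).flatten

/-- `u` is primitive: not of the form `v^k` with `k > 1`. -/
def primitive (u : List Char) : Prop :=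
  ¬ ∃ v k, 1 < k ∧ u = listPow v k

/-- `⟨b,e,c⟩` is a run of `s` (1-indexed). -/
def isRun (s : List Char) (b e c : ℕ) : Prop :=
  1 ≤ b ∧ b ≤ e ∧ e ≤ s.length ∧
  2 * c ≤ e - b + 1 ∧
  hasPeriod (sub s b e) c ∧
  (∀ c', hasPeriod (sub s b e) c' → c ≤ c') ∧
  (1 < b → ¬ hasPer (sub s (b - 1) e) c) ∧
  (e < s.length → ¬ hasPer (sub s b (e + 1)) c)

/-- length of the longest common prefix. -/
def lcp : List Char → List Char → ℕ
  | a :: u, b :: v => if a = b then lcp u v + 1 else 0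
  | _, _ => 0

/-- length of the longest common suffix. -/
def lcs (u v : List Char) : ℕ := lcp u.reverse v.reverse

/-- `per_R(w,c)`: length of the longest prefix of `w` having period `c`. -/
noncomputable def perR (w : List Char) (c : ℕ) : ℕ :=
  sSup {r | r ≤ w.length ∧ hasPer (w.take r) c}

/-- `per_L(w,c)`: length of the longest suffix of `w` having period `c`. -/
noncomputable def perL (w : List Char) (c : ℕ) : ℕ :=
  sSup {r | r ≤ w.length ∧ hasPer (w.drop (w.length - r)) c}


/-- 0-indexed occurrence predicate. -/
def occ0 (s p : List Char) (a : ℕ) : Prop :=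
  a + p.length ≤ s.length ∧ ∀ t < p.length, s[a + t]? = p[t]?

lemma take_drop_eq_iff (s p : List Char) (a : ℕ) (h : a + p.length ≤ s.length) :
    (s.drop a).take p.length = p ↔ ∀ t < p.length, s[a + t]? = p[t]? := by
  constructor
  · intro heq t ht
    have : ((s.drop a).take p.length)[t]? = p[t]? := by rw [heq]
    rwa [List.getElem?_take, if_pos ht, List.getElem?_drop] at this
  · intro hpt
    apply List.ext_getElem?
    intro n
    by_cases hn : n < p.length
    · rw [List.getElem?_take, if_pos hn, List.getElem?_drop, hpt n hn]
    · rw [List.getElem?_take, if_neg hn, List.getElem?_eq_none (le_of_not_gt hn)]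

lemma occursAt_iff_occ0 (s p : List Char) (hp : p ≠ []) (i : ℕ) :
    occursAt s p i ↔ 1 ≤ i ∧ occ0 s p (i - 1) := by
  have hL : 0 < p.length := List.length_pos_iff.mpr hp
  constructor
  · rintro ⟨hi, hbound, hsub⟩
    have hb' : (i - 1) + p.length ≤ s.length := by omega
    refine ⟨hi, hb', ?_⟩
    rw [← take_drop_eq_iff s p (i-1) hb']
    have : (i + p.length - 1) - i + 1 = p.length := by omega
    unfold sub at hsub
    rwa [this] at hsub
  · rintro ⟨hi, hb', hpt⟩
    refine ⟨hi, by omega, ?_⟩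
    unfold sub
    have : (i + p.length - 1) - i + 1 = p.length := by omega
    rw [this, take_drop_eq_iff s p (i-1) hb']
    exact hpt

lemma per_dvd {p : List Char} {g : ℕ} (hg : hasPer p g) :
    ∀ {r t : ℕ}, g ∣ r → t + r < p.length → p[t]? = p[t + r]? := by
  have aux : ∀ k t, t + g * k < p.length → p[t]? = p[t + g * k]? := by
    intro k
    induction k with
    | zero => simp
    | succ n ih =>
      intro t ht
      have hgpos := hg.1
      have h1 : t + g < p.length := by
        have : g * (n+1) = g * n + g := by ring
        omega
      have e1 : p[t]? = p[t + g]? := hg.2 t h1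
      have e2 : p[t + g]? = p[(t + g) + g * n]? := ih (t + g) (by
        have : g * (n+1) = g * n + g := by ring
        omega)
      rw [e1, e2]
      congr 1
      ring
  rintro r t ⟨k, rfl⟩ h
  exact aux k t h

lemma overlap_per {s p : List Char} {a d : ℕ} (h1 : occ0 s p a) (h2 : occ0 s p (a + d))
    (hd : 0 < d) : hasPer p d := by
  refine ⟨hd, fun j hj => ?_⟩
  have e1 : s[(a + d) + j]? = p[j]? := h2.2 j (by omega)
  have e2 : s[a + (j + d)]? = p[j + d]? := h1.2 (j + d) hj
  rw [← e1, ← e2]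
  congr 1
  omega

lemma shift_occ {s p : List Char} {a D g r : ℕ} (h1 : occ0 s p a) (h2 : occ0 s p (a + D))
    (hg : hasPer p g) (hgD : g ∣ D) (hgr : g ∣ r) (hrD : r ≤ D) (hDL : D ≤ p.length) :
    occ0 s p (a + r) := by
  refine ⟨by have := h2.1; omega, fun t ht => ?_⟩
  by_cases hc : t + r < p.length
  · have e1 : s[a + (r + t)]? = p[r + t]? := h1.2 (r + t) (by omega)
    have e2 : p[t]? = p[t + r]? := per_dvd hg hgr hc
    rw [show (a + r) + t = a + (r + t) by omega, e1, e2]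
    congr 1
    omega
  · set t' := t - (D - r) with ht'
    have htt : t' + (D - r) = t := by omega
    have e1 : s[(a + D) + t']? = p[t']? := h2.2 t' (by omega)
    have e2 : p[t']? = p[t' + (D - r)]? := per_dvd hg (Nat.dvd_sub hgD hgr) (by omega)
    rw [show (a + r) + t = (a + D) + t' by omega, e1, e2, htt]

lemma sub_per {p : List Char} {a c : ℕ} (hpa : hasPer p a) (hpb : hasPer p c)
    (hac : a < c) (hsum : a + c ≤ p.length) : hasPer p (c - a) := by
  refine ⟨by omega, fun j hj => ?_⟩
  by_cases hc : j + c < p.length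
  · have e1 : p[j]? = p[j + c]? := hpb.2 j hc
    have e2 : p[j + (c - a)]? = p[(j + (c - a)) + a]? := hpa.2 _ (by omega)
    rw [e1, e2]
    congr 1
    omega
  · have hja : a ≤ j := by omega
    have e1 : p[j - a]? = p[(j - a) + a]? := hpa.2 _ (by omega)
    have e2 : p[j - a]? = p[(j - a) + c]? := hpb.2 _ (by omega)
    rw [show j = (j - a) + a by omega, ← e1, e2]
    congr 1
    omega

lemma fine_wilf {p : List Char} : ∀ n a c, a + c ≤ n → 0 < a → 0 < c → hasPer p a →
    hasPer p c → a + c ≤ p.length → hasPer p (Nat.gcd a c) := by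
  intro n
  induction n using Nat.strong_induction_on with
  | _ n ih =>
    intro a c hn ha hc hpa hpc hL
    rcases lt_trichotomy a c with h | h | h
    · have hsub : hasPer p (c - a) := sub_per hpa hpc h hL
      have := ih c (by omega) a (c - a) (by omega) ha (by omega) hpa hsub (by omega)
      rwa [Nat.gcd_sub_self_right (le_of_lt h)] at this
    · subst h
      rwa [Nat.gcd_self]
    · have hsub : hasPer p (a - c) := sub_per hpc hpa h (by omega)
      have := ih a (by omega) c (a - c) (by omega) hc (by omega) hpc hsub (by omega)
      rwa [Nat.gcd_sub_self_right (le_of_lt h), Nat.gcd_comm] at this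

theorem stmt0 (s p : List Char) (hs : s ≠ []) (hp : p ≠ [])
    (b e : ℕ) (hb : 1 ≤ b) (hbe : b ≤ e) (he : e ≤ b + p.length) :
    ∃ a c k : ℕ, ∀ i, (occursAt s p i ∧ b ≤ i ∧ i ≤ e) ↔ ∃ j < k, i = a + c * j := by
  classical
  have hL : 0 < p.length := List.length_pos_iff.mpr hp
  set T : Finset ℕ := (Finset.Icc b e).filter (fun i => occursAt s p i) with hT
  have hmemT : ∀ i, i ∈ T ↔ (occursAt s p i ∧ b ≤ i ∧ i ≤ e) := by
    intro i
    simp [hT, Finset.mem_filter, Finset.mem_Icc]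
    tauto
  rcases eq_or_ne T ∅ with hTe | hTne
  · refine ⟨0, 0, 0, fun i => ⟨fun h => ?_, fun ⟨j, hj, _⟩ => absurd hj (Nat.not_lt_zero j)⟩⟩
    have : i ∈ T := (hmemT i).2 h
    rw [hTe] at this
    exact absurd this (Finset.notMem_empty i)
  · have hne : T.Nonempty := Finset.nonempty_iff_ne_empty.mpr hTne
    set m := T.min' hne with hm
    set M := T.max' hne with hM
    have hmT : m ∈ T := T.min'_mem hne
    have hMT : M ∈ T := T.max'_mem hne
    have hfacts : ∀ x ∈ T, occ0 s p (x - 1) ∧ 1 ≤ x ∧ b ≤ x ∧ x ≤ e := by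
      intro x hx
      obtain ⟨hocc, hbx, hxe⟩ := (hmemT x).1 hx
      obtain ⟨h1, h2⟩ := (occursAt_iff_occ0 s p hp x).1 hocc
      exact ⟨h2, h1, hbx, hxe⟩
    obtain ⟨hoccm, h1m, hbm, hme⟩ := hfacts m hmT
    obtain ⟨hoccM, h1M, hbM, hMe⟩ := hfacts M hMT
    rcases eq_or_lt_of_le (T.min'_le M hMT) with hmM | hmM
    · -- single occurrence
      refine ⟨m, 0, 1, fun i => ?_⟩
      constructor
      · intro h
        have hi : i ∈ T := (hmemT i).2 h
        have h1 : m ≤ i := T.min'_le i hi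
        have h2 : i ≤ M := T.le_max' i hi
        exact ⟨0, Nat.zero_lt_one, by omega⟩
      · rintro ⟨j, hj, rfl⟩
        interval_cases j
        simpa using (hmemT (m + 0 * 0)).1 (by simpa using hmT)
    · -- at least two occurrences
      have hMem : M ∈ T.erase m := Finset.mem_erase.mpr ⟨by omega, hMT⟩
      have h2ne : (T.erase m).Nonempty := ⟨M, hMem⟩
      set m2 := (T.erase m).min' h2ne with hm2
      have hm2T : m2 ∈ T.erase m := (T.erase m).min'_mem h2ne
      obtain ⟨hm2ne, hm2T'⟩ := Finset.mem_erase.mp hm2T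
      have hmm2 : m < m2 := lt_of_le_of_ne (T.min'_le m2 hm2T') (Ne.symm hm2ne)
      obtain ⟨hoccm2, h1m2, hbm2, hm2e⟩ := hfacts m2 hm2T'
      set d := m2 - m with hd
      have hdpos : 0 < d := by omega
      have hdL : d ≤ p.length := by omega
      have hoccmd : occ0 s p ((m - 1) + d) := by
        rw [show (m - 1) + d = m2 - 1 by omega]
        exact hoccm2
      have hperd : hasPer p d := overlap_per hoccm hoccmd hdpos
      -- divisibility of all differences
      have hdvd : ∀ x ∈ T, d ∣ (x - m) := by
        intro x hx
        obtain ⟨hoccx, h1x, hbx, hxe⟩ := hfacts x hx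
        have hmx : m ≤ x := T.min'_le x hx
        rcases eq_or_ne x m with rfl | hxm
        · simp
        · have hxT' : x ∈ T.erase m := Finset.mem_erase.mpr ⟨hxm, hx⟩
          have hm2x : m2 ≤ x := (T.erase m).min'_le x hxT'
          rcases eq_or_lt_of_le hm2x with hx2 | hx2
          · exact ⟨1, by omega⟩
          · set D2 := x - m2 with hD2
            have hD2pos : 0 < D2 := by omega
            have hoccm2D : occ0 s p ((m2 - 1) + D2) := by
              rw [show (m2 - 1) + D2 = x - 1 by omega]
              exact hoccx
            have hperD2 : hasPer p D2 := overlap_per hoccm2 hoccm2D hD2pos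
            have hsum : d + D2 ≤ p.length := by omega
            have hperg : hasPer p (Nat.gcd d D2) :=
              fine_wilf (d + D2) d D2 le_rfl hdpos hD2pos hperd hperD2 hsum
            set g := Nat.gcd d D2 with hg
            have hgd : g ∣ d := Nat.gcd_dvd_left d D2
            have hgD2 : g ∣ D2 := Nat.gcd_dvd_right d D2
            have hgpos : 0 < g := Nat.gcd_pos_of_pos_left _ hdpos
            have hgle : g ≤ d := Nat.le_of_dvd hdpos hgd
            rcases eq_or_lt_of_le hgle with hgeq | hglt
            · have h1 : d ∣ D2 := hgeq ▸ hgD2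
              have h2 : d ∣ d + D2 := Dvd.dvd.add (dvd_refl d) h1
              rwa [show d + D2 = x - m by omega] at h2
            · exfalso
              have hocc' : occ0 s p ((m - 1) + g) :=
                shift_occ hoccm hoccmd hperg hgd (dvd_refl g) hgle hdL
              have hoccAt : occursAt s p (m + g) := by
                rw [occursAt_iff_occ0 s p hp]
                exact ⟨by omega, by rwa [show m + g - 1 = (m - 1) + g by omega]⟩
              have hmemg : m + g ∈ T := (hmemT (m + g)).2 ⟨hoccAt, by omega, by omega⟩
              have : m + g ∈ T.erase m := Finset.mem_erase.mpr ⟨by omega, hmemg⟩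
              have := (T.erase m).min'_le (m + g) this
              omega
      have hdvdM : d ∣ M - m := hdvd M hMT
      -- all AP points up to M are occurrences
      have hAP : ∀ j, d * j ≤ M - m → occursAt s p (m + d * j) ∧ b ≤ m + d * j ∧ m + d * j ≤ e := by
        intro j hj
        have hoccMD : occ0 s p ((m - 1) + (M - m)) := by
          rw [show (m - 1) + (M - m) = M - 1 by omega]
          exact hoccM
        have hocc' : occ0 s p ((m - 1) + d * j) :=
          shift_occ hoccm hoccMD hperd hdvdM (Dvd.intro j rfl) hj (by omega)
        refine ⟨?_, by omega, by omega⟩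
        rw [occursAt_iff_occ0 s p hp]
        exact ⟨by omega, by rwa [show m + d * j - 1 = (m - 1) + d * j by omega]⟩
      refine ⟨m, d, (M - m) / d + 1, fun i => ?_⟩
      constructor
      · intro h
        have hi : i ∈ T := (hmemT i).2 h
        have h1 : m ≤ i := T.min'_le i hi
        have h2 : i ≤ M := T.le_max' i hi
        have hdv : d ∣ i - m := hdvd i hi
        refine ⟨(i - m) / d, ?_, ?_⟩
        · have : (i - m) / d ≤ (M - m) / d := Nat.div_le_div_right (by omega)
          omega
        · have := Nat.mul_div_cancel' hdv
          omega
      · rintro ⟨j, hj, rfl⟩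
        have hjle : d * j ≤ M - m := by
          have h1 : j ≤ (M - m) / d := by omega
          have h2 : d * j ≤ d * ((M - m) / d) := Nat.mul_le_mul_left d h1
          have h3 : d * ((M - m) / d) = M - m := Nat.mul_div_cancel' hdvdM
          omega
        exact hAP j hjle
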